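/- arXiv:math/0101200 — 2 statements merged into one kernel-verified Lean document; each statement's English description precedes it below -/
import Mathlib

section
/- Let G′ ⊆ ℂ×ℂ be open and let η₁, η₂ : ℂ×ℂ → ℂ be ℂ-differentiable on G′. Define φₖ(a,b) = ηₖ(conj a, conj b) (so each φₖ is conjugate holomorphic in both a and b), and let Ψ be the associated quaternionic function of (φ₁,φ₂). Then Ψ is conjugate regular: the conjugate Fueter equation ∂Ψ/∂x − i·∂Ψ/∂y − j·∂Ψ/∂z − k·∂Ψ/∂u = 0 holds at every point (x,y,z,u) with (x−iy, z−iu) ∈ G′. -/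
/-- The quaternionic function associated with a pair of complex functions:
`Ψ(x,y,z,u) = Re φ₁ + (Im φ₁)i + (Re φ₂)j + (Im φ₂)k`, the argument being
`(x+iy, z+iu) ∈ ℂ × ℂ`. -/
noncomputable def quatFn (φ₁ φ₂ : ℂ × ℂ → ℂ) (p : ℂ × ℂ) : Quaternion ℝ :=
  ⟨(φ₁ p).re, (φ₁ p).im, (φ₂ p).re, (φ₂ p).im⟩

/-- The quaternion unit `i`. -/
noncomputable def qI : Quaternion ℝ := ⟨0, 1, 0, 0⟩
/-- The quaternion unit `j`. -/
noncomputable def qJ : Quaternion ℝ := ⟨0, 0, 1, 0⟩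
/-- The quaternion unit `k`. -/
noncomputable def qK : Quaternion ℝ := ⟨0, 0, 0, 1⟩

theorem qI_re : (qI : Quaternion ℝ).re = 0 := rfl
theorem qI_imI : (qI : Quaternion ℝ).imI = 1 := rfl
theorem qI_imJ : (qI : Quaternion ℝ).imJ = 0 := rfl
theorem qI_imK : (qI : Quaternion ℝ).imK = 0 := rfl
theorem qJ_re : (qJ : Quaternion ℝ).re = 0 := rfl
theorem qJ_imI : (qJ : Quaternion ℝ).imI = 0 := rfl
theorem qJ_imJ : (qJ : Quaternion ℝ).imJ = 1 := rfl
theorem qJ_imK : (qJ : Quaternion ℝ).imK = 0 := rfl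
theorem qK_re : (qK : Quaternion ℝ).re = 0 := rfl
theorem qK_imI : (qK : Quaternion ℝ).imI = 0 := rfl
theorem qK_imJ : (qK : Quaternion ℝ).imJ = 0 := rfl
theorem qK_imK : (qK : Quaternion ℝ).imK = 1 := rfl

/-- `(w₁, w₂) ↦ ⟨w₁.re, w₁.im, w₂.re, w₂.im⟩` as an `ℝ`-continuous-linear map. -/
noncomputable def Qmap : ℂ × ℂ →L[ℝ] Quaternion ℝ where
  toFun w := ⟨w.1.re, w.1.im, w.2.re, w.2.im⟩
  map_add' w v := by apply QuaternionAlgebra.ext <;> simp <;> rfl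
  map_smul' s w := by apply QuaternionAlgebra.ext <;> simp <;> rfl
  cont := by
    have h : ∀ w : ℂ × ℂ, (⟨w.1.re, w.1.im, w.2.re, w.2.im⟩ : Quaternion ℝ) =
        ((w.1.re : ℝ) : Quaternion ℝ) + w.1.im • qI + w.2.re • qJ + w.2.im • qK := by
      intro w
      apply QuaternionAlgebra.ext <;> simp [qI_re, qI_imI, qI_imJ, qI_imK, qJ_re, qJ_imI, qJ_imJ, qJ_imK, qK_re, qK_imI, qK_imJ,
        qK_imK, Quaternion.re_smul, Quaternion.imI_smul, Quaternion.imJ_smul, Quaternion.imK_smul]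
    simp only [h]
    exact ((Quaternion.continuous_coe.comp (Complex.continuous_re.comp continuous_fst)).add
      ((Complex.continuous_im.comp continuous_fst).smul continuous_const)).add
      ((Complex.continuous_re.comp continuous_snd).smul continuous_const) |>.add
      ((Complex.continuous_im.comp continuous_snd).smul continuous_const)

theorem Qmap_apply (w : ℂ × ℂ) : Qmap w = ⟨w.1.re, w.1.im, w.2.re, w.2.im⟩ := rfl

theorem Qmap_re (w : ℂ × ℂ) : (Qmap w).re = w.1.re := rfl
theorem Qmap_imI (w : ℂ × ℂ) : (Qmap w).imI = w.1.im := rfl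
theorem Qmap_imJ (w : ℂ × ℂ) : (Qmap w).imJ = w.2.re := rfl
theorem Qmap_imK (w : ℂ × ℂ) : (Qmap w).imK = w.2.im := rfl

open Complex in
/-- The algebraic heart of the conjugate Fueter equation. -/
lemma keylem (A₁ A₂ B₁ B₂ : ℂ) :
    Qmap (A₁, A₂) - qI * Qmap (-I * A₁, -I * A₂) - qJ * Qmap (B₁, B₂)
      - qK * Qmap (-I * B₁, -I * B₂) = 0 := by
  apply Quaternion.ext <;>
    simp [Qmap_re, Qmap_imI, Qmap_imJ, Qmap_imK, qI_re, qI_imI, qI_imJ, qI_imK, qJ_re, qJ_imI,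
      qJ_imJ, qJ_imK, qK_re, qK_imI, qK_imJ, qK_imK, Quaternion.re_mul, Quaternion.imI_mul,
      Quaternion.imJ_mul, Quaternion.imK_mul] <;> rfl


theorem conj_holomorphic_implies_conjugate_regular (G' : Set (ℂ × ℂ)) (hG' : IsOpen G')
    (η₁ η₂ : ℂ × ℂ → ℂ)
    (hd₁ : ∀ q ∈ G', DifferentiableAt ℂ η₁ q)
    (hd₂ : ∀ q ∈ G', DifferentiableAt ℂ η₂ q)
    (φ₁ φ₂ : ℂ × ℂ → ℂ)
    (hφ₁ : ∀ a b : ℂ, φ₁ (a, b) = η₁ ((starRingEnd ℂ) a, (starRingEnd ℂ) b))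
    (hφ₂ : ∀ a b : ℂ, φ₂ (a, b) = η₂ ((starRingEnd ℂ) a, (starRingEnd ℂ) b))
    (Ψ : ℂ × ℂ → Quaternion ℝ) (hΨ : Ψ = quatFn φ₁ φ₂) :
    ∀ x y z u : ℝ,
      ((x - y * Complex.I, z - u * Complex.I) : ℂ × ℂ) ∈ G' →
      fderiv ℝ Ψ (x + y * Complex.I, z + u * Complex.I) (1, 0) -
        qI * fderiv ℝ Ψ (x + y * Complex.I, z + u * Complex.I) (Complex.I, 0) -
        qJ * fderiv ℝ Ψ (x + y * Complex.I, z + u * Complex.I) (0, 1) -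
        qK * fderiv ℝ Ψ (x + y * Complex.I, z + u * Complex.I) (0, Complex.I) = 0 := by
  subst hΨ
  intro x y z u hq
  set p : ℂ × ℂ := (x + y * Complex.I, z + u * Complex.I) with hp
  set q : ℂ × ℂ := (x - y * Complex.I, z - u * Complex.I) with hqdef
  set C : (ℂ × ℂ) →L[ℝ] (ℂ × ℂ) :=
    (Complex.conjCLE.toContinuousLinearMap).prodMap Complex.conjCLE.toContinuousLinearMap
    with hC
  have hCapp : ∀ w : ℂ × ℂ, C w = ((starRingEnd ℂ) w.1, (starRingEnd ℂ) w.2) := fun w => rfl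
  have hCp : C p = q := by
    rw [hCapp]
    simp [hp, hqdef, Prod.ext_iff, map_add, map_mul, Complex.conj_I, Complex.conj_ofReal,
      sub_eq_add_neg]
  set L₁ := fderiv ℂ η₁ q with hL₁
  set L₂ := fderiv ℂ η₂ q with hL₂
  have h₁ : HasFDerivAt η₁ (L₁.restrictScalars ℝ) q := ((hd₁ q hq).hasFDerivAt).restrictScalars ℝ
  have h₂ : HasFDerivAt η₂ (L₂.restrictScalars ℝ) q := ((hd₂ q hq).hasFDerivAt).restrictScalars ℝ
  have hφ₁f : φ₁ = fun w => η₁ (C w) := funext fun w => by rw [hCapp]; exact hφ₁ w.1 w.2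
  have hφ₂f : φ₂ = fun w => η₂ (C w) := funext fun w => by rw [hCapp]; exact hφ₂ w.1 w.2
  have hD₁ : HasFDerivAt φ₁ ((L₁.restrictScalars ℝ).comp C) p := by
    rw [hφ₁f]
    exact HasFDerivAt.comp p (hCp ▸ h₁) C.hasFDerivAt
  have hD₂ : HasFDerivAt φ₂ ((L₂.restrictScalars ℝ).comp C) p := by
    rw [hφ₂f]
    exact HasFDerivAt.comp p (hCp ▸ h₂) C.hasFDerivAt
  have hQ : quatFn φ₁ φ₂ = fun w => Qmap (φ₁ w, φ₂ w) := rfl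
  have hDΨ : HasFDerivAt (quatFn φ₁ φ₂)
      (Qmap.comp (((L₁.restrictScalars ℝ).comp C).prod ((L₂.restrictScalars ℝ).comp C))) p := by
    rw [hQ]
    exact HasFDerivAt.comp p Qmap.hasFDerivAt (hD₁.prodMk hD₂)
  rw [hDΨ.fderiv]
  have hval : ∀ v : ℂ × ℂ,
      (Qmap.comp (((L₁.restrictScalars ℝ).comp C).prod ((L₂.restrictScalars ℝ).comp C))) v
        = Qmap (L₁ (C v), L₂ (C v)) := fun v => rfl
  simp only [hval, hCapp]
  have e1 : (((starRingEnd ℂ) 1, (starRingEnd ℂ) (0:ℂ)) : ℂ × ℂ) = (1, 0) := by simp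
  have e2 : (((starRingEnd ℂ) Complex.I, (starRingEnd ℂ) (0:ℂ)) : ℂ × ℂ)
      = (-Complex.I) • ((1 : ℂ), (0 : ℂ)) := by simp [Prod.ext_iff]
  have e3 : (((starRingEnd ℂ) (0:ℂ), (starRingEnd ℂ) (1:ℂ)) : ℂ × ℂ) = (0, 1) := by simp
  have e4 : (((starRingEnd ℂ) (0:ℂ), (starRingEnd ℂ) Complex.I) : ℂ × ℂ)
      = (-Complex.I) • ((0 : ℂ), (1 : ℂ)) := by simp [Prod.ext_iff]
  rw [e1, e2, e3, e4, map_smul, map_smul, map_smul, map_smul]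
  simpa [smul_eq_mul] using keylem (L₁ (1,0)) (L₂ (1,0)) (L₁ (0,1)) (L₂ (0,1))
end

section
/- Let η₁, η₂, ω₁, ω₂ : ℂ×ℂ → ℂ be ℂ-differentiable on an open set G′ ⊆ ℂ×ℂ, and let φₖ(a,b) = ηₖ(a, conj b) and θₖ(a,b) = ωₖ(a, conj b). Define the bicomplex product function χ = (φ₁·θ₁ − φ₂·θ₂, φ₂·θ₁ + φ₁·θ₂). Then the associated quaternionic function of χ satisfies Fueter's equation ∂Ψ/∂x + i·∂Ψ/∂y + j·∂Ψ/∂z + k·∂Ψ/∂u = 0 at every point (x,y,z,u) with (x+iy, z−iu) ∈ G′; that is, the bicomplex product of two regular functions with coanalytic components is again regular. -/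
noncomputable def qL : (ℂ × ℂ) →ₗ[ℝ] Quaternion ℝ where
  toFun zw := ⟨zw.1.re, zw.1.im, zw.2.re, zw.2.im⟩
  map_add' p q := by ext <;> simp <;> rfl
  map_smul' r p := by ext <;> simp <;> rfl

noncomputable def qLc : (ℂ × ℂ) →L[ℝ] Quaternion ℝ := LinearMap.toContinuousLinearMap qL

@[simp] lemma qLc_apply (zw : ℂ × ℂ) :
    qLc zw = ⟨zw.1.re, zw.1.im, zw.2.re, zw.2.im⟩ := rfl

noncomputable def qC : (ℂ × ℂ) →L[ℝ] ℂ × ℂ :=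
  (ContinuousLinearMap.fst ℝ ℂ ℂ).prod
    (Complex.conjCLE.toContinuousLinearMap.comp (ContinuousLinearMap.snd ℝ ℂ ℂ))

@[simp] lemma qC_apply (zw : ℂ × ℂ) : qC zw = (zw.1, (starRingEnd ℂ) zw.2) := rfl

theorem bicomplex_product_of_regular_is_regular (G' : Set (ℂ × ℂ)) (hG' : IsOpen G')
    (η₁ η₂ ω₁ ω₂ : ℂ × ℂ → ℂ)
    (hdη₁ : ∀ q ∈ G', DifferentiableAt ℂ η₁ q)
    (hdη₂ : ∀ q ∈ G', DifferentiableAt ℂ η₂ q)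
    (hdω₁ : ∀ q ∈ G', DifferentiableAt ℂ ω₁ q)
    (hdω₂ : ∀ q ∈ G', DifferentiableAt ℂ ω₂ q)
    (φ₁ φ₂ θ₁ θ₂ : ℂ × ℂ → ℂ)
    (hφ₁ : ∀ a b : ℂ, φ₁ (a, b) = η₁ (a, (starRingEnd ℂ) b))
    (hφ₂ : ∀ a b : ℂ, φ₂ (a, b) = η₂ (a, (starRingEnd ℂ) b))
    (hθ₁ : ∀ a b : ℂ, θ₁ (a, b) = ω₁ (a, (starRingEnd ℂ) b))
    (hθ₂ : ∀ a b : ℂ, θ₂ (a, b) = ω₂ (a, (starRingEnd ℂ) b))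
    (Ψ : ℂ × ℂ → Quaternion ℝ)
    (hΨ : Ψ = quatFn (fun p => φ₁ p * θ₁ p - φ₂ p * θ₂ p)
                     (fun p => φ₂ p * θ₁ p + φ₁ p * θ₂ p)) :
    ∀ x y z u : ℝ,
      ((x + y * Complex.I, z - u * Complex.I) : ℂ × ℂ) ∈ G' →
      fderiv ℝ Ψ (x + y * Complex.I, z + u * Complex.I) (1, 0) +
        qI * fderiv ℝ Ψ (x + y * Complex.I, z + u * Complex.I) (Complex.I, 0) +
        qJ * fderiv ℝ Ψ (x + y * Complex.I, z + u * Complex.I) (0, 1) +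
        qK * fderiv ℝ Ψ (x + y * Complex.I, z + u * Complex.I) (0, Complex.I) = 0 := by
  intro x y z u hmem
  set p : ℂ × ℂ := (x + y * Complex.I, z + u * Complex.I) with hp
  set q : ℂ × ℂ := (x + y * Complex.I, z - u * Complex.I) with hqdef
  have hq : qC p = q := by
    simp [hp, hqdef, Prod.ext_iff, Complex.ext_iff]
  set ν₁ : ℂ × ℂ → ℂ := fun w => η₁ w * ω₁ w - η₂ w * ω₂ w with hν₁
  set ν₂ : ℂ × ℂ → ℂ := fun w => η₂ w * ω₁ w + η₁ w * ω₂ w with hν₂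
  have hdν₁ : DifferentiableAt ℂ ν₁ q :=
    ((hdη₁ q hmem).mul (hdω₁ q hmem)).sub ((hdη₂ q hmem).mul (hdω₂ q hmem))
  have hdν₂ : DifferentiableAt ℂ ν₂ q :=
    ((hdη₂ q hmem).mul (hdω₁ q hmem)).add ((hdη₁ q hmem).mul (hdω₂ q hmem))
  set A₁ := fderiv ℂ ν₁ q with hA₁
  set A₂ := fderiv ℂ ν₂ q with hA₂
  have hΨ' : Ψ = fun w => qLc (ν₁ (qC w), ν₂ (qC w)) := by
    funext w
    obtain ⟨a, b⟩ := w
    simp [hΨ, quatFn, hφ₁, hφ₂, hθ₁, hθ₂, hν₁, hν₂]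
    rfl
  have h1' : HasFDerivAt ν₁ (A₁.restrictScalars ℝ) (qC p) := by
    rw [hq]; exact hdν₁.hasFDerivAt.restrictScalars ℝ
  have h2' : HasFDerivAt ν₂ (A₂.restrictScalars ℝ) (qC p) := by
    rw [hq]; exact hdν₂.hasFDerivAt.restrictScalars ℝ
  have h1 : HasFDerivAt (fun w => ν₁ (qC w)) ((A₁.restrictScalars ℝ).comp qC) p :=
    h1'.comp p qC.hasFDerivAt
  have h2 : HasFDerivAt (fun w => ν₂ (qC w)) ((A₂.restrictScalars ℝ).comp qC) p :=
    h2'.comp p qC.hasFDerivAt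
  have hΨd : HasFDerivAt Ψ
      (qLc.comp (((A₁.restrictScalars ℝ).comp qC).prod ((A₂.restrictScalars ℝ).comp qC))) p := by
    rw [hΨ']
    exact qLc.hasFDerivAt.comp p (h1.prodMk h2)
  rw [hΨd.fderiv]
  have hval : ∀ v : ℂ × ℂ,
      (qLc.comp (((A₁.restrictScalars ℝ).comp qC).prod ((A₂.restrictScalars ℝ).comp qC))) v
        = qLc (A₁ (qC v), A₂ (qC v)) := fun v => rfl
  rw [hval, hval, hval, hval]
  have e1 : qC ((1 : ℂ), (0 : ℂ)) = (1, 0) := by simp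
  have e2 : qC ((Complex.I : ℂ), (0 : ℂ)) = (Complex.I, 0) := by simp
  have e3 : qC ((0 : ℂ), (1 : ℂ)) = (0, 1) := by simp
  have e4 : qC ((0 : ℂ), (Complex.I : ℂ)) = (0, -Complex.I) := by simp
  rw [e1, e2, e3, e4]
  have m1 : ((Complex.I, 0) : ℂ × ℂ) = Complex.I • ((1 : ℂ), (0 : ℂ)) := by
    simp [Prod.smul_def]
  have m2 : ((0, -Complex.I) : ℂ × ℂ) = (-Complex.I) • ((0 : ℂ), (1 : ℂ)) := by
    simp [Prod.smul_def]
  rw [m1, m2, map_smul, map_smul, map_smul, map_smul]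
  set a := A₁ ((1 : ℂ), (0 : ℂ))
  set b := A₁ ((0 : ℂ), (1 : ℂ))
  set c := A₂ ((1 : ℂ), (0 : ℂ))
  set d := A₂ ((0 : ℂ), (1 : ℂ))
  ext <;>
    simp only [Quaternion.re_add, Quaternion.imI_add, Quaternion.imJ_add, Quaternion.imK_add,
      Quaternion.re_mul, Quaternion.imI_mul, Quaternion.imJ_mul, Quaternion.imK_mul,
      Quaternion.re_zero, Quaternion.imI_zero, Quaternion.imJ_zero, Quaternion.imK_zero] <;>
    simp [qI, qJ, qK, Quaternion.re_mul, Quaternion.imI_mul, Quaternion.imJ_mul,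
      Quaternion.imK_mul, Complex.smul_re, Complex.smul_im, smul_eq_mul,
      Complex.mul_re, Complex.mul_im] <;>
    ring
end
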